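/- Let k ≥ 2 be an integer, let f : ℍ → ℂ be holomorphic, let g ∈ SL(2, ℝ), and set γ = g·T·g^{−1} where T = (1 1; 0 1). Assume f|_k γ = f and that (f|_k g)(τ) = Σ_{m≥1} a_m e^{2πimτ} for complex numbers (a_m)_{m≥1} with Σ_{m≥1} |a_m| r^m < ∞ for every 0 < r < 1. Then for every τ₀ ∈ ℍ there exists a polynomial p of degree at most k−2 with complex coefficients such that for all τ ∈ ℍ: (f̃_{τ₀} |_{2−k} γ)(τ) − f̃_{τ₀}(τ) = (p|_{2−k} γ)(τ) − p(τ). (That is, the period polynomial of f at the parabolic element γ is a coboundary, so the cocycle γ ↦ f̃_{τ₀}|_{2−k}(γ−1) is parabolic.) -/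

import Mathlib

open Complex

/-- The weight-`w` slash action of the real matrix `(a b; c d)` on functions `ℂ → ℂ`. -/
noncomputable def slash (w : ℤ) (a b c d : ℝ) (F : ℂ → ℂ) : ℂ → ℂ :=
  fun τ => ((c : ℂ) * τ + (d : ℂ)) ^ (-w) * F (((a : ℂ) * τ + (b : ℂ)) / ((c : ℂ) * τ + (d : ℂ)))

/-- The integral of `g` along the straight segment from `z₀` to `z₁`. -/
noncomputable def segInt (g : ℂ → ℂ) (z₀ z₁ : ℂ) : ℂ :=
  ∫ t in (0:ℝ)..1, g (z₀ + (t : ℂ) * (z₁ - z₀)) * (z₁ - z₀)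

/-- The Eichler integral `f̃_{τ₀}(τ) = ((2πi)^{k−1}/(k−2)!) ∫_{τ₀}^{τ} (τ−z)^{k−2} f(z) dz`. -/
noncomputable def eichler (k : ℕ) (f : ℂ → ℂ) (τ₀ τ : ℂ) : ℂ :=
  (2 * (Real.pi : ℂ) * Complex.I) ^ (k - 1) / (Nat.factorial (k - 2) : ℂ) *
    segInt (fun z => (τ - z) ^ (k - 2) * f z) τ₀ τ

/-- Möbius map of the inverse matrix `(d, -b; -c, a)`. -/
noncomputable def giF (a b c d : ℝ) (z : ℂ) : ℂ := ((d:ℂ)*z - b)/(-(c:ℂ)*z + a)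

/-- `2πi(m+1)`. -/
noncomputable def muF (m : ℕ) : ℂ := 2*(Real.pi:ℂ)*Complex.I*((m:ℂ)+1)

lemma muF_ne_zero (m : ℕ) : muF m ≠ 0 := by
  unfold muF
  have h1 : (Real.pi:ℂ) ≠ 0 := by exact_mod_cast Real.pi_ne_zero
  have h2 : ((m:ℂ)+1) ≠ 0 := Nat.cast_add_one_ne_zero m
  simp [Complex.I_ne_zero, h1, h2]

lemma one_le_norm_muF_pow (m j : ℕ) : 1 ≤ ‖(muF m)^j‖ := by
  rw [norm_pow]
  apply one_le_pow₀
  have : muF m = ((2*Real.pi*((m:ℝ)+1) : ℝ):ℂ) * Complex.I := by unfold muF; push_cast; ring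
  rw [this, norm_mul, Complex.norm_I, mul_one, Complex.norm_real, Real.norm_eq_abs]
  have hπ := Real.pi_gt_three
  have hm : (0:ℝ) ≤ (m:ℝ) := Nat.cast_nonneg m
  rw [_root_.abs_of_nonneg (by nlinarith)]
  nlinarith

lemma norm_exp_muF (m : ℕ) (w : ℂ) :
    ‖Complex.exp (muF m * w)‖ = (Real.exp (-(2*Real.pi*w.im)))^(m+1) := by
  rw [Complex.norm_exp, ← Real.exp_nat_mul]
  congr 1
  unfold muF
  simp [Complex.mul_re, Complex.mul_im, Complex.I_re, Complex.I_im, Complex.ofReal_re,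
    Complex.ofReal_im, Complex.add_re, Complex.add_im, Complex.natCast_re, Complex.natCast_im]
  push_cast
  ring

lemma exp_aux_mem (y : ℝ) (hy : 0 < y) :
    0 < Real.exp (-(2*Real.pi*y)) ∧ Real.exp (-(2*Real.pi*y)) < 1 := by
  refine ⟨Real.exp_pos _, ?_⟩
  rw [Real.exp_lt_one_iff]
  have := Real.pi_pos
  nlinarith

lemma lin_ne_zero (p q : ℝ) (h : p ≠ 0 ∨ q ≠ 0) (z : ℂ) (hz : 0 < z.im) :
    (p:ℂ)*z + q ≠ 0 := by
  rcases eq_or_ne p 0 with hp | hp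
  · subst hp
    have hq : q ≠ 0 := h.resolve_left (by simp)
    simpa using fun h' => hq (by exact_mod_cast h')
  · intro h'
    have : ((p:ℂ)*z + q).im = 0 := by rw [h']; simp
    simp [Complex.add_im, Complex.mul_im] at this
    rcases this with h1 | h1
    · exact hp h1
    · exact absurd h1 (ne_of_gt hz)

lemma moebius_im (a b c d : ℝ) (h : a*d - b*c = 1) (z : ℂ) :
    (((a:ℂ)*z+b)/((c:ℂ)*z+d)).im = z.im / Complex.normSq ((c:ℂ)*z + d) := by
  have hnum : ((a:ℂ)*z+b).im * ((c:ℂ)*z+d).re - ((a:ℂ)*z+b).re * ((c:ℂ)*z+d).im = z.im := by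
    simp [Complex.add_im, Complex.add_re, Complex.mul_im, Complex.mul_re]
    linear_combination z.im * h
  rw [Complex.div_im, div_sub_div_same, hnum]

lemma moebius_im_pos (a b c d : ℝ) (h : a*d - b*c = 1) (hcd : c ≠ 0 ∨ d ≠ 0)
    (z : ℂ) (hz : 0 < z.im) : 0 < (((a:ℂ)*z+b)/((c:ℂ)*z+d)).im := by
  rw [moebius_im a b c d h z]
  have hden := lin_ne_zero c d hcd z hz
  exact div_pos hz (Complex.normSq_pos.2 hden)


noncomputable def Qf (μ w' : ℂ) : ℕ → ℂ → ℂ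
  | 0 => fun w => Complex.exp (μ * w) / μ
  | (l+1) => fun w => Complex.exp (μ * w) * (w' - w)^(l+1) / μ + ((l:ℂ)+1)/μ * Qf μ w' l w

lemma Qf_hasDerivAt (μ w' : ℂ) (hμ : μ ≠ 0) (l : ℕ) (w : ℂ) :
    HasDerivAt (Qf μ w' l) ((w' - w)^l * Complex.exp (μ * w)) w := by
  induction l generalizing w with
  | zero =>
    have h1 : HasDerivAt (fun w : ℂ => μ * w) μ w := by
      simpa using (hasDerivAt_id w).const_mul μ
    have := (h1.cexp).div_const μ
    simpa [Qf, mul_div_assoc, mul_div_cancel_left₀ _ hμ, mul_comm] using this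
  | succ l ih =>
    have h1 : HasDerivAt (fun w : ℂ => μ * w) μ w := by
      simpa using (hasDerivAt_id w).const_mul μ
    have h2 : HasDerivAt (fun w : ℂ => w' - w) (-1) w := by
      simpa using (hasDerivAt_id w).const_sub w'
    have h3 : HasDerivAt (fun w : ℂ => (w' - w)^(l+1))
        (((l:ℂ)+1) * (w' - w)^l * (-1)) w := by
      simpa using h2.fun_pow (l+1)
    have h4 := ((h1.cexp.mul h3).div_const μ).fun_add ((ih w).const_mul (((l:ℂ)+1)/μ))
    have : HasDerivAt (Qf μ w' (l+1))
        ((Complex.exp (μ*w) * μ * (w'-w)^(l+1) + Complex.exp (μ*w) * (((l:ℂ)+1) * (w'-w)^l * (-1)))/μ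
          + ((l:ℂ)+1)/μ * ((w'-w)^l * Complex.exp (μ*w))) w := by
      simpa [Qf] using h4
    convert this using 1
    field_simp
    ring

lemma Qf_self (μ w' : ℂ) (l : ℕ) : Qf μ w' l w' = (l.factorial : ℂ) / μ^(l+1) * Complex.exp (μ * w') := by
  induction l with
  | zero => simp [Qf]; ring
  | succ l ih =>
    simp [Qf, ih, Nat.factorial_succ]
    push_cast
    field_simp
    ring

lemma Qf_closed (μ w' w : ℂ) (l : ℕ) :
    Qf μ w' l w = ∑ j ∈ Finset.range (l+1),
      (l.factorial : ℂ)/((l-j).factorial : ℂ)/μ^(j+1) * ((w' - w)^(l-j) * Complex.exp (μ * w)) := by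
  induction l with
  | zero => simp [Qf]; ring
  | succ l ih =>
    rw [Finset.sum_range_succ']
    have hstep : ∀ j ∈ Finset.range (l+1),
        ((l+1).factorial : ℂ)/(((l+1)-(j+1)).factorial : ℂ)/μ^(j+1+1) * ((w' - w)^((l+1)-(j+1)) * Complex.exp (μ * w))
        = ((l:ℂ)+1)/μ * ((l.factorial : ℂ)/((l-j).factorial : ℂ)/μ^(j+1) * ((w' - w)^(l-j) * Complex.exp (μ * w))) := by
      intro j hj
      have : (l+1) - (j+1) = l - j := by omega
      rw [this, Nat.factorial_succ]
      push_cast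
      ring
    rw [Finset.sum_congr rfl hstep, ← Finset.mul_sum, ← ih]
    have hf : ((l+1).factorial : ℂ) / (((l+1) - 0).factorial : ℂ) = 1 := by
      rw [Nat.sub_zero, div_self]
      exact_mod_cast Nat.factorial_ne_zero (l+1)
    rw [Nat.sub_zero] at hf ⊢
    rw [hf]
    simp [Qf]
    ring

section main
variable (a b c d : ℝ)

lemma pair_ca (hdet : a * d - b * c = 1) : (-c ≠ 0 ∨ a ≠ 0) := by
  by_contra h
  push_neg at h
  obtain ⟨h1, h2⟩ := h
  have hc : c = 0 := neg_eq_zero.mp h1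
  rw [h2, hc] at hdet; simp at hdet

lemma den_ne (hdet : a * d - b * c = 1) (z : ℂ) (hz : 0 < z.im) : -(c:ℂ)*z + a ≠ 0 := by
  have := lin_ne_zero (-c) a (pair_ca a b c d hdet) z hz
  push_cast at this
  convert this using 2

lemma gi_im_pos (hdet : a * d - b * c = 1) (z : ℂ) (hz : 0 < z.im) :
    0 < (giF a b c d z).im := by
  have h : d*a - (-b)*(-c) = 1 := by linarith
  have := moebius_im_pos d (-b) (-c) a h (pair_ca a b c d hdet) z hz
  unfold giF
  push_cast at this
  convert this using 3 <;> ring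

lemma gam_im_pos (z : ℂ) (hz : 0 < z.im) :
    0 < ((((1-a*c:ℝ):ℂ)*z + ((a^2:ℝ):ℂ)) / (((-c^2:ℝ):ℂ)*z + ((1+a*c:ℝ):ℂ))).im := by
  have h : (1-a*c)*(1+a*c) - (a^2)*(-c^2) = 1 := by ring
  have hcd : (-c^2) ≠ 0 ∨ (1+a*c) ≠ 0 := by
    rcases eq_or_ne c 0 with hc | hc
    · right; rw [hc]; norm_num
    · left; simpa using pow_ne_zero 2 hc
  exact moebius_im_pos (1-a*c) (a^2) (-c^2) (1+a*c) h hcd z hz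

lemma A1 (hdet : a * d - b * c = 1) (z : ℂ) (hz : 0 < z.im) :
    (c:ℂ)*(giF a b c d z) + d = (-(c:ℂ)*z + a)⁻¹ := by
  have h0 := den_ne a b c d hdet z hz
  have hdetC : (a:ℂ)*d - (b:ℂ)*c = 1 := by exact_mod_cast hdet
  have hm : ((c:ℂ)*(giF a b c d z) + d) * (-(c:ℂ)*z + a) = 1 := by
    unfold giF
    have e : ((c:ℂ)*(((d:ℂ)*z - b)/(-(c:ℂ)*z + a)) + d) * (-(c:ℂ)*z + a)
        = (c:ℂ)*((((d:ℂ)*z - b)/(-(c:ℂ)*z + a))*(-(c:ℂ)*z + a)) + d*(-(c:ℂ)*z + a) := by ring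
    rw [e, div_mul_cancel₀ _ h0]
    linear_combination hdetC
  exact eq_inv_of_mul_eq_one_left (by linear_combination hm)

lemma A2 (hdet : a * d - b * c = 1) (z : ℂ) (hz : 0 < z.im) :
    ((a:ℂ)*(giF a b c d z) + b)/((c:ℂ)*(giF a b c d z) + d) = z := by
  have h0 := den_ne a b c d hdet z hz
  have hdetC : (a:ℂ)*d - (b:ℂ)*c = 1 := by exact_mod_cast hdet
  rw [A1 a b c d hdet z hz, div_eq_mul_inv, inv_inv]
  unfold giF
  have e : ((a:ℂ)*(((d:ℂ)*z - b)/(-(c:ℂ)*z + a)) + b) * (-(c:ℂ)*z + a)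
      = (a:ℂ)*((((d:ℂ)*z - b)/(-(c:ℂ)*z + a))*(-(c:ℂ)*z + a)) + b*(-(c:ℂ)*z + a) := by ring
  rw [e, div_mul_cancel₀ _ h0]
  linear_combination z * hdetC

lemma jga_ne (z : ℂ) (hz : 0 < z.im) : ((-c^2:ℝ):ℂ)*z + ((1+a*c:ℝ):ℂ) ≠ 0 := by
  have hcd : (-c^2) ≠ 0 ∨ (1+a*c) ≠ 0 := by
    rcases eq_or_ne c 0 with hc | hc
    · right; rw [hc]; norm_num
    · left; simpa using pow_ne_zero 2 hc
  exact lin_ne_zero (-c^2) (1+a*c) hcd z hz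

lemma A4 (z : ℂ) (hz : 0 < z.im) :
    (-(c:ℂ)*((((1-a*c:ℝ):ℂ)*z + ((a^2:ℝ):ℂ)) / (((-c^2:ℝ):ℂ)*z + ((1+a*c:ℝ):ℂ))) + a)
      * (((-c^2:ℝ):ℂ)*z + ((1+a*c:ℝ):ℂ)) = -(c:ℂ)*z + a := by
  have h0 := jga_ne a c z hz
  have e1 : (-(c:ℂ)*((((1-a*c:ℝ):ℂ)*z + ((a^2:ℝ):ℂ)) / (((-c^2:ℝ):ℂ)*z + ((1+a*c:ℝ):ℂ))) + a)
      * (((-c^2:ℝ):ℂ)*z + ((1+a*c:ℝ):ℂ))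
      = -(c:ℂ)*(((((1-a*c:ℝ):ℂ)*z + ((a^2:ℝ):ℂ)) / (((-c^2:ℝ):ℂ)*z + ((1+a*c:ℝ):ℂ)))
          * ((((-c^2:ℝ):ℂ)*z + ((1+a*c:ℝ):ℂ)))) + a * (((-c^2:ℝ):ℂ)*z + ((1+a*c:ℝ):ℂ)) := by
    ring
  rw [e1, div_mul_cancel₀ _ h0]
  push_cast
  ring

lemma A3 (hdet : a * d - b * c = 1) (z : ℂ) (hz : 0 < z.im) :
    giF a b c d ((((1-a*c:ℝ):ℂ)*z + ((a^2:ℝ):ℂ)) / (((-c^2:ℝ):ℂ)*z + ((1+a*c:ℝ):ℂ)))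
      = giF a b c d z + 1 := by
  have h0 := jga_ne a c z hz
  have h1 := den_ne a b c d hdet z hz
  have h2 : 0 < ((((1-a*c:ℝ):ℂ)*z + ((a^2:ℝ):ℂ)) / (((-c^2:ℝ):ℂ)*z + ((1+a*c:ℝ):ℂ))).im :=
    gam_im_pos a c z hz
  have h3 := den_ne a b c d hdet _ h2
  have hdetC : (a:ℂ)*d - (b:ℂ)*c = 1 := by exact_mod_cast hdet
  set Γ : ℂ := (((1-a*c:ℝ):ℂ)*z + ((a^2:ℝ):ℂ)) / (((-c^2:ℝ):ℂ)*z + ((1+a*c:ℝ):ℂ)) with hΓ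
  show ((d:ℂ)*Γ - b)/(-(c:ℂ)*Γ + a) = giF a b c d z + 1
  rw [div_eq_iff h3]
  apply mul_right_cancel₀ h0
  rw [mul_assoc, A4 a c z hz]
  have e2 : ((d:ℂ)*Γ - b) * (((-c^2:ℝ):ℂ)*z + ((1+a*c:ℝ):ℂ))
      = (d:ℂ)*(Γ * (((-c^2:ℝ):ℂ)*z + ((1+a*c:ℝ):ℂ))) - b*(((-c^2:ℝ):ℂ)*z + ((1+a*c:ℝ):ℂ)) := by
    ring
  rw [e2, hΓ, div_mul_cancel₀ _ h0]
  unfold giF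
  have e3 : (((d:ℂ)*z - b)/(-(c:ℂ)*z + a) + 1) * (-(c:ℂ)*z + a)
      = (((d:ℂ)*z - b)/(-(c:ℂ)*z + a))*(-(c:ℂ)*z + a) + (-(c:ℂ)*z + a) := by ring
  rw [e3, div_mul_cancel₀ _ h1]
  push_cast
  linear_combination ((a:ℂ) - c*z) * hdetC

lemma A5 (w₀ : ℂ) (hdet : a * d - b * c = 1) (τ : ℂ) (hτ : 0 < τ.im) :
    (-(c:ℂ)*τ+a) * (giF a b c d τ - w₀) = ((d:ℂ)+w₀*c)*τ - ((b:ℂ)+w₀*a) := by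
  have h1 := den_ne a b c d hdet τ hτ
  have e1 : (-(c:ℂ)*τ+a) * (giF a b c d τ - w₀)
      = (giF a b c d τ) * (-(c:ℂ)*τ+a) - w₀ * (-(c:ℂ)*τ+a) := by ring
  rw [e1]
  unfold giF
  rw [div_mul_cancel₀ _ h1]
  ring

lemma hw_key (hdet : a * d - b * c = 1) (τ z : ℂ) (hτ : 0 < τ.im) (hz : 0 < z.im) :
    (giF a b c d τ - giF a b c d z) * ((-(c:ℂ)*τ + a) * (-(c:ℂ)*z + a)) = τ - z := by
  have h1 := den_ne a b c d hdet τ hτ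
  have h2 := den_ne a b c d hdet z hz
  have hdetC : (a:ℂ)*d - (b:ℂ)*c = 1 := by exact_mod_cast hdet
  unfold giF
  have e1 : (((d:ℂ)*τ - b)/(-(c:ℂ)*τ + a) - ((d:ℂ)*z - b)/(-(c:ℂ)*z + a)) * ((-(c:ℂ)*τ + a) * (-(c:ℂ)*z + a))
      = ((((d:ℂ)*τ - b)/(-(c:ℂ)*τ + a))*(-(c:ℂ)*τ + a))*(-(c:ℂ)*z + a)
        - ((((d:ℂ)*z - b)/(-(c:ℂ)*z + a))*(-(c:ℂ)*z + a))*(-(c:ℂ)*τ + a) := by ring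
  rw [e1, div_mul_cancel₀ _ h1, div_mul_cancel₀ _ h2]
  linear_combination (τ - z) * hdetC


lemma gi_hasDerivAt (hdet : a * d - b * c = 1) (z : ℂ) (hz : 0 < z.im) :
    HasDerivAt (giF a b c d) (((-(c:ℂ)*z + a)^2)⁻¹) z := by
  have h0 := den_ne a b c d hdet z hz
  have hdetC : (a:ℂ)*d - (b:ℂ)*c = 1 := by exact_mod_cast hdet
  have h1 : HasDerivAt (fun w : ℂ => (d:ℂ)*w - b) (d:ℂ) z := by
    simpa using ((hasDerivAt_id z).const_mul (d:ℂ)).sub_const (b:ℂ)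
  have h2 : HasDerivAt (fun w : ℂ => -(c:ℂ)*w + a) (-(c:ℂ)) z := by
    simpa using ((hasDerivAt_id z).const_mul (-(c:ℂ))).add_const (a:ℂ)
  have h3 := h1.div h2 h0
  have hval : (((-(c:ℂ)*z + a)^2)⁻¹ : ℂ)
      = ((d:ℂ) * (-(c:ℂ)*z + a) - ((d:ℂ)*z - b) * (-(c:ℂ))) / (-(c:ℂ)*z + a)^2 := by
    rw [inv_eq_one_div]
    congr 1
    linear_combination -hdetC
  rw [hval]
  exact h3

lemma Am_hasDerivAt (hdet : a * d - b * c = 1) (k l : ℕ) (hkl : k = l + 2) (m : ℕ)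
    (A τ : ℂ) (hτ : 0 < τ.im) (z : ℂ) (hz : 0 < z.im) :
    HasDerivAt (fun w => A * ((-(c:ℂ)*τ+a)^l * Qf (muF m) (giF a b c d τ) l (giF a b c d w)))
      ((τ - z)^l * (A * ((-(c:ℂ)*z+a)^k)⁻¹ * Complex.exp (muF m * giF a b c d z))) z := by
  have h0 := den_ne a b c d hdet z hz
  have hq := Qf_hasDerivAt (muF m) (giF a b c d τ) (muF_ne_zero m) l (giF a b c d z)
  have hgi := gi_hasDerivAt a b c d hdet z hz
  have h2 : HasDerivAt
      (fun w => (A * (-(c:ℂ)*τ+a)^l) * (Qf (muF m) (giF a b c d τ) l (giF a b c d w)))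
      ((A * (-(c:ℂ)*τ+a)^l) * ((giF a b c d τ - giF a b c d z)^l
          * Complex.exp (muF m * giF a b c d z) * ((-(c:ℂ)*z+a)^2)⁻¹)) z := by
    have := (HasDerivAt.comp z hq hgi).const_mul (A * (-(c:ℂ)*τ+a)^l)
    simpa [Function.comp_def, mul_assoc, mul_comm, mul_left_comm] using this
  have hfun : (fun w => A * ((-(c:ℂ)*τ+a)^l * Qf (muF m) (giF a b c d τ) l (giF a b c d w)))
      = (fun w => (A * (-(c:ℂ)*τ+a)^l) * (Qf (muF m) (giF a b c d τ) l (giF a b c d w))) := by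
    funext w; ring
  rw [hfun]
  have hval : ((τ - z)^l * (A * ((-(c:ℂ)*z+a)^k)⁻¹ * Complex.exp (muF m * giF a b c d z)))
      = ((A * (-(c:ℂ)*τ+a)^l) * ((giF a b c d τ - giF a b c d z)^l
          * Complex.exp (muF m * giF a b c d z) * ((-(c:ℂ)*z+a)^2)⁻¹)) := by
    have hpow : ((-(c:ℂ)*z+a))^l * (((-(c:ℂ)*z+a))^(l+2))⁻¹ = (((-(c:ℂ)*z+a))^2)⁻¹ := by
      rw [pow_add, mul_inv, ← mul_assoc, mul_inv_cancel₀ (pow_ne_zero l h0), one_mul]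
    rw [← hw_key a b c d hdet τ z hτ hz, hkl, mul_pow, mul_pow]
    linear_combination ((giF a b c d τ - giF a b c d z)^l
      * Complex.exp (muF m * giF a b c d z) * A * (-(c:ℂ)*τ+a)^l) * hpow
  rw [hval]
  exact h2


lemma seg_im (τ₀ τ : ℂ) (h₀ : 0 < τ₀.im) (hτ : 0 < τ.im) (t : ℝ)
    (ht : t ∈ Set.uIcc (0:ℝ) 1) : 0 < (τ₀ + (t:ℂ)*(τ - τ₀)).im := by
  rw [Set.uIcc_of_le (by norm_num : (0:ℝ) ≤ 1)] at ht
  have h1 : (τ₀ + (t:ℂ)*(τ - τ₀)).im = τ₀.im + t*(τ.im - τ₀.im) := by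
    simp [Complex.add_im, Complex.mul_im, Complex.sub_im, Complex.sub_re]
  rw [h1]
  obtain ⟨ht0, ht1⟩ := ht
  nlinarith [mul_nonneg ht0 hτ.le, mul_nonneg (sub_nonneg.2 ht1) h₀.le]

lemma ell_hasDerivAt (τ₀ τ : ℂ) (t : ℝ) :
    HasDerivAt (fun s : ℝ => τ₀ + (s:ℂ)*(τ - τ₀)) (τ - τ₀) t := by
  have h : HasDerivAt (fun s : ℝ => ((s:ℝ):ℂ)) 1 t := (hasDerivAt_id ((t:ℝ):ℂ)).comp_ofReal
  simpa using (h.mul_const (τ - τ₀)).const_add τ₀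

lemma ell_continuous (τ₀ τ : ℂ) : Continuous (fun t : ℝ => τ₀ + (t:ℂ)*(τ - τ₀)) := by
  fun_prop

lemma mode_cont (hdet : a * d - b * c = 1) (k l : ℕ) (m : ℕ) (A τ₀ τ : ℂ)
    (h₀ : 0 < τ₀.im) (hτ : 0 < τ.im) :
    ContinuousOn (fun t : ℝ => (τ - (τ₀ + (t:ℂ)*(τ-τ₀)))^l
        * (A * ((-(c:ℂ)*(τ₀ + (t:ℂ)*(τ-τ₀))+a)^k)⁻¹
            * Complex.exp (muF m * giF a b c d (τ₀ + (t:ℂ)*(τ-τ₀)))) * (τ-τ₀))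
      (Set.uIcc (0:ℝ) 1) := by
  have hℓ := ell_continuous τ₀ τ
  have hden : ∀ t ∈ Set.uIcc (0:ℝ) 1, -(c:ℂ)*(τ₀+(t:ℂ)*(τ-τ₀)) + a ≠ 0 :=
    fun t ht => den_ne a b c d hdet _ (seg_im τ₀ τ h₀ hτ t ht)
  have hgi : ContinuousOn (fun t : ℝ => giF a b c d (τ₀ + (t:ℂ)*(τ-τ₀))) (Set.uIcc (0:ℝ) 1) := by
    unfold giF
    exact ContinuousOn.div
      (Continuous.continuousOn (by fun_prop)) (Continuous.continuousOn (by fun_prop)) hden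
  refine ContinuousOn.mul (ContinuousOn.mul ?_ (ContinuousOn.mul ?_ ?_)) continuousOn_const
  · exact Continuous.continuousOn (by fun_prop)
  · refine continuousOn_const.mul (ContinuousOn.inv₀ (Continuous.continuousOn (by fun_prop)) ?_)
    exact fun t ht => pow_ne_zero k (hden t ht)
  · exact Complex.continuous_exp.comp_continuousOn (continuousOn_const.mul hgi)

lemma mode_integral (hdet : a * d - b * c = 1) (k l : ℕ) (hkl : k = l + 2) (m : ℕ)
    (A τ₀ τ : ℂ) (h₀ : 0 < τ₀.im) (hτ : 0 < τ.im) :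
    (∫ t in (0:ℝ)..1, (τ - (τ₀ + (t:ℂ)*(τ-τ₀)))^l
        * (A * ((-(c:ℂ)*(τ₀ + (t:ℂ)*(τ-τ₀))+a)^k)⁻¹
            * Complex.exp (muF m * giF a b c d (τ₀ + (t:ℂ)*(τ-τ₀)))) * (τ-τ₀))
      = A * ((-(c:ℂ)*τ+a)^l * Qf (muF m) (giF a b c d τ) l (giF a b c d τ))
        - A * ((-(c:ℂ)*τ+a)^l * Qf (muF m) (giF a b c d τ) l (giF a b c d τ₀)) := by
  have := intervalIntegral.integral_eq_sub_of_hasDerivAt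
    (f := fun s : ℝ => A * ((-(c:ℂ)*τ+a)^l
        * Qf (muF m) (giF a b c d τ) l (giF a b c d (τ₀ + (s:ℂ)*(τ-τ₀)))))
    (f' := fun t : ℝ => (τ - (τ₀ + (t:ℂ)*(τ-τ₀)))^l
        * (A * ((-(c:ℂ)*(τ₀ + (t:ℂ)*(τ-τ₀))+a)^k)⁻¹
            * Complex.exp (muF m * giF a b c d (τ₀ + (t:ℂ)*(τ-τ₀)))) * (τ-τ₀))
    (a := 0) (b := 1) ?_ ?_
  · rw [this]
    norm_num
  · intro t ht
    have hzim := seg_im τ₀ τ h₀ hτ t ht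
    have hA := Am_hasDerivAt a b c d hdet k l hkl m A τ hτ _ hzim
    have hℓ := ell_hasDerivAt τ₀ τ t
    have h2 := HasDerivAt.scomp t hA hℓ
    simp only [Function.comp_def, smul_eq_mul] at h2
    convert h2 using 1
    ring
  · exact (mode_cont a b c d hdet k l m A τ₀ τ h₀ hτ).intervalIntegrable


lemma norm_div_mu_le (x : ℂ) (m i : ℕ) : ‖x / (muF m)^i‖ ≤ ‖x‖ := by
  rw [norm_div]
  exact div_le_self (norm_nonneg x) (one_le_norm_muF_pow m i)

lemma summable_master (am : ℕ → ℂ)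
    (hsum : ∀ r : ℝ, 0 < r → r < 1 → Summable (fun m : ℕ => ‖am (m + 1)‖ * r ^ (m + 1)))
    (w : ℂ) (hw : 0 < w.im) (g : ℕ → ℂ) (C : ℝ) (hg : ∀ m, ‖g m‖ ≤ C) :
    Summable (fun m => am (m+1) * g m * Complex.exp (muF m * w)) := by
  obtain ⟨hr0, hr1⟩ := exp_aux_mem w.im hw
  apply Summable.of_norm_bounded
    (g := fun m => C * (‖am (m+1)‖ * (Real.exp (-(2*Real.pi*w.im)))^(m+1)))
    ((hsum _ hr0 hr1).mul_left C)
  intro m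
  rw [norm_mul, norm_mul, norm_exp_muF]
  have h : ‖g m‖ * (‖am (m+1)‖ * (Real.exp (-(2*Real.pi*w.im)))^(m+1))
      ≤ C * (‖am (m+1)‖ * (Real.exp (-(2*Real.pi*w.im)))^(m+1)) :=
    mul_le_mul_of_nonneg_right (hg m)
      (mul_nonneg (norm_nonneg (am (m+1))) (pow_nonneg (Real.exp_pos _).le (m+1)))
  nlinarith [h]


lemma pointwise_fourier (hdet : a * d - b * c = 1) (k : ℕ) (f : ℂ → ℂ) (am : ℕ → ℂ)
    (hfourier : ∀ τ : ℂ, 0 < τ.im →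
      slash (k : ℤ) a b c d f τ =
        ∑' m : ℕ, am (m + 1) * Complex.exp (2 * (Real.pi : ℂ) * Complex.I * ((m : ℂ) + 1) * τ))
    (z : ℂ) (hz : 0 < z.im) :
    f z = ∑' m : ℕ, am (m+1) * ((-(c:ℂ)*z+a)^k)⁻¹ * Complex.exp (muF m * giF a b c d z) := by
  have hgz := gi_im_pos a b c d hdet z hz
  have h1 := hfourier (giF a b c d z) hgz
  unfold slash at h1
  rw [A2 a b c d hdet z hz, A1 a b c d hdet z hz] at h1
  have h2 : ((-(c:ℂ)*z+a)⁻¹)^(-(k:ℤ)) = (-(c:ℂ)*z+a)^(k:ℕ) := by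
    rw [zpow_neg, inv_zpow, inv_inv, zpow_natCast]
  rw [h2] at h1
  have hne := pow_ne_zero k (den_ne a b c d hdet z hz)
  have h3 : f z = ((-(c:ℂ)*z+a)^k)⁻¹
      * ∑' m : ℕ, am (m + 1) * Complex.exp (2 * (Real.pi : ℂ) * Complex.I * ((m : ℂ) + 1) * giF a b c d z) := by
    rw [← h1, inv_mul_cancel_left₀ hne]
  rw [h3, ← tsum_mul_left]
  apply tsum_congr
  intro m
  unfold muF
  ring


lemma gi_ell_cont (hdet : a * d - b * c = 1) (τ₀ τ : ℂ) (h₀ : 0 < τ₀.im) (hτ : 0 < τ.im) :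
    ContinuousOn (fun t : ℝ => giF a b c d (τ₀ + (t:ℂ)*(τ-τ₀))) (Set.uIcc (0:ℝ) 1) := by
  have hden : ∀ t ∈ Set.uIcc (0:ℝ) 1, -(c:ℂ)*(τ₀+(t:ℂ)*(τ-τ₀)) + a ≠ 0 :=
    fun t ht => den_ne a b c d hdet _ (seg_im τ₀ τ h₀ hτ t ht)
  unfold giF
  exact ContinuousOn.div
    (Continuous.continuousOn (by fun_prop)) (Continuous.continuousOn (by fun_prop)) hden

lemma interchange (hdet : a * d - b * c = 1) (k l : ℕ) (am : ℕ → ℂ)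
    (hsum : ∀ r : ℝ, 0 < r → r < 1 → Summable (fun m : ℕ => ‖am (m + 1)‖ * r ^ (m + 1)))
    (τ₀ τ : ℂ) (h₀ : 0 < τ₀.im) (hτ : 0 < τ.im) :
    (∫ t in (0:ℝ)..1, ∑' m : ℕ, ((τ - (τ₀ + (t:ℂ)*(τ-τ₀)))^l
        * (am (m+1) * ((-(c:ℂ)*(τ₀ + (t:ℂ)*(τ-τ₀))+a)^k)⁻¹
            * Complex.exp (muF m * giF a b c d (τ₀ + (t:ℂ)*(τ-τ₀)))) * (τ-τ₀)))
      = ∑' m : ℕ, ∫ t in (0:ℝ)..1, ((τ - (τ₀ + (t:ℂ)*(τ-τ₀)))^l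
        * (am (m+1) * ((-(c:ℂ)*(τ₀ + (t:ℂ)*(τ-τ₀))+a)^k)⁻¹
            * Complex.exp (muF m * giF a b c d (τ₀ + (t:ℂ)*(τ-τ₀)))) * (τ-τ₀)) := by
  have hsub : Set.Ioc (0:ℝ) 1 ⊆ Set.uIcc (0:ℝ) 1 := by
    rw [Set.uIcc_of_le (by norm_num : (0:ℝ) ≤ 1)]
    exact Set.Ioc_subset_Icc_self
  have hden : ∀ t ∈ Set.uIcc (0:ℝ) 1, -(c:ℂ)*(τ₀+(t:ℂ)*(τ-τ₀)) + a ≠ 0 :=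
    fun t ht => den_ne a b c d hdet _ (seg_im τ₀ τ h₀ hτ t ht)
  have hmeas : ∀ m : ℕ, MeasureTheory.AEStronglyMeasurable
      (fun t : ℝ => (τ - (τ₀ + (t:ℂ)*(τ-τ₀)))^l
        * (am (m+1) * ((-(c:ℂ)*(τ₀ + (t:ℂ)*(τ-τ₀))+a)^k)⁻¹
            * Complex.exp (muF m * giF a b c d (τ₀ + (t:ℂ)*(τ-τ₀)))) * (τ-τ₀))
      (MeasureTheory.volume.restrict (Set.Ioc (0:ℝ) 1)) := fun m =>
    (((mode_cont a b c d hdet k l m (am (m+1)) τ₀ τ h₀ hτ)).mono hsub).aestronglyMeasurable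
      measurableSet_Ioc
  -- uniform bound for the non-exponential part
  have hcont1 : ContinuousOn (fun t : ℝ => (τ - (τ₀ + (t:ℂ)*(τ-τ₀)))^l
      * ((-(c:ℂ)*(τ₀ + (t:ℂ)*(τ-τ₀))+a)^k)⁻¹ * (τ-τ₀)) (Set.uIcc (0:ℝ) 1) := by
    refine ContinuousOn.mul (ContinuousOn.mul ?_ ?_) continuousOn_const
    · exact Continuous.continuousOn (by fun_prop)
    · refine ContinuousOn.inv₀ (Continuous.continuousOn (by fun_prop)) ?_
      exact fun t ht => pow_ne_zero k (hden t ht)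
  obtain ⟨C, hC⟩ := isCompact_uIcc.exists_bound_of_continuousOn hcont1
  -- minimum of the imaginary part of gi ∘ ℓ
  obtain ⟨t₁, ht₁, hmin⟩ := isCompact_uIcc.exists_isMinOn (⟨0, Set.left_mem_uIcc⟩)
    (Complex.continuous_im.comp_continuousOn (gi_ell_cont a b c d hdet τ₀ τ h₀ hτ))
  set ε : ℝ := (giF a b c d (τ₀ + ((t₁:ℝ):ℂ)*(τ-τ₀))).im with hεdef
  have hε : 0 < ε := gi_im_pos a b c d hdet _ (seg_im τ₀ τ h₀ hτ t₁ ht₁)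
  obtain ⟨hr0, hr1⟩ := exp_aux_mem ε hε
  set r : ℝ := Real.exp (-(2*Real.pi*ε)) with hrdef
  -- pointwise bound
  have hbound : ∀ m : ℕ, ∀ t ∈ Set.Ioc (0:ℝ) 1,
      ‖(τ - (τ₀ + (t:ℂ)*(τ-τ₀)))^l
        * (am (m+1) * ((-(c:ℂ)*(τ₀ + (t:ℂ)*(τ-τ₀))+a)^k)⁻¹
            * Complex.exp (muF m * giF a b c d (τ₀ + (t:ℂ)*(τ-τ₀)))) * (τ-τ₀)‖
        ≤ (|C|+1) * (‖am (m+1)‖ * r^(m+1)) := by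
    intro m t ht
    have htu := hsub ht
    have heq : (τ - (τ₀ + (t:ℂ)*(τ-τ₀)))^l
        * (am (m+1) * ((-(c:ℂ)*(τ₀ + (t:ℂ)*(τ-τ₀))+a)^k)⁻¹
            * Complex.exp (muF m * giF a b c d (τ₀ + (t:ℂ)*(τ-τ₀)))) * (τ-τ₀)
        = ((τ - (τ₀ + (t:ℂ)*(τ-τ₀)))^l * ((-(c:ℂ)*(τ₀ + (t:ℂ)*(τ-τ₀))+a)^k)⁻¹ * (τ-τ₀))
          * am (m+1) * Complex.exp (muF m * giF a b c d (τ₀ + (t:ℂ)*(τ-τ₀))) := by ring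
    rw [heq, norm_mul, norm_mul, norm_exp_muF]
    have h1 : ‖(τ - (τ₀ + (t:ℂ)*(τ-τ₀)))^l * ((-(c:ℂ)*(τ₀ + (t:ℂ)*(τ-τ₀))+a)^k)⁻¹ * (τ-τ₀)‖
        ≤ |C|+1 := le_trans (hC t htu) (by linarith [le_abs_self C])
    have h2 : (Real.exp (-(2*Real.pi*(giF a b c d (τ₀ + (t:ℂ)*(τ-τ₀))).im)))^(m+1) ≤ r^(m+1) := by
      apply pow_le_pow_left₀ (Real.exp_pos _).le
      rw [hrdef, Real.exp_le_exp]
      have hm := isMinOn_iff.mp hmin t htu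
      simp only [Function.comp_apply] at hm
      rw [← hεdef] at hm
      nlinarith [Real.pi_pos, hm]
    calc ‖(τ - (τ₀ + (t:ℂ)*(τ-τ₀)))^l * ((-(c:ℂ)*(τ₀ + (t:ℂ)*(τ-τ₀))+a)^k)⁻¹ * (τ-τ₀)‖
          * ‖am (m+1)‖ * (Real.exp (-(2*Real.pi*(giF a b c d (τ₀ + (t:ℂ)*(τ-τ₀))).im)))^(m+1)
        ≤ (|C|+1) * ‖am (m+1)‖
          * (Real.exp (-(2*Real.pi*(giF a b c d (τ₀ + (t:ℂ)*(τ-τ₀))).im)))^(m+1) := by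
          apply mul_le_mul_of_nonneg_right (mul_le_mul_of_nonneg_right h1 (norm_nonneg _))
          positivity
      _ ≤ (|C|+1) * ‖am (m+1)‖ * r^(m+1) := by
          apply mul_le_mul_of_nonneg_left h2
          positivity
      _ = (|C|+1) * (‖am (m+1)‖ * r^(m+1)) := by ring
  rw [intervalIntegral.integral_of_le (zero_le_one)]
  rw [MeasureTheory.integral_tsum hmeas ?_]
  · exact tsum_congr fun m => (intervalIntegral.integral_of_le zero_le_one).symm
  · have hlin : ∀ m : ℕ, (∫⁻ t in Set.Ioc (0:ℝ) 1,
        ‖(τ - (τ₀ + (t:ℂ)*(τ-τ₀)))^l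
        * (am (m+1) * ((-(c:ℂ)*(τ₀ + (t:ℂ)*(τ-τ₀))+a)^k)⁻¹
            * Complex.exp (muF m * giF a b c d (τ₀ + (t:ℂ)*(τ-τ₀)))) * (τ-τ₀)‖₊ ∂MeasureTheory.volume)
        ≤ ENNReal.ofReal ((|C|+1) * (‖am (m+1)‖ * r^(m+1))) := by
      intro m
      have step : (∫⁻ t in Set.Ioc (0:ℝ) 1,
          ‖(τ - (τ₀ + (t:ℂ)*(τ-τ₀)))^l
          * (am (m+1) * ((-(c:ℂ)*(τ₀ + (t:ℂ)*(τ-τ₀))+a)^k)⁻¹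
              * Complex.exp (muF m * giF a b c d (τ₀ + (t:ℂ)*(τ-τ₀)))) * (τ-τ₀)‖₊ ∂MeasureTheory.volume)
          ≤ ∫⁻ _ in Set.Ioc (0:ℝ) 1,
              ENNReal.ofReal ((|C|+1) * (‖am (m+1)‖ * r^(m+1))) ∂MeasureTheory.volume := by
        apply MeasureTheory.setLIntegral_mono' measurableSet_Ioc
        intro t ht
        rw [← enorm_eq_nnnorm, ← ofReal_norm]
        exact ENNReal.ofReal_le_ofReal (hbound m t ht)
      refine le_trans step ?_
      rw [MeasureTheory.setLIntegral_const, Real.volume_Ioc]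
      simp
    refine ne_top_of_le_ne_top ?_ (ENNReal.tsum_le_tsum hlin)
    rw [← ENNReal.ofReal_tsum_of_nonneg (fun m => by positivity)
      (((hsum r hr0 hr1).mul_left (|C|+1)))]
    exact ENNReal.ofReal_ne_top


lemma summable_F (am : ℕ → ℂ)
    (hsum : ∀ r : ℝ, 0 < r → r < 1 → Summable (fun m : ℕ => ‖am (m + 1)‖ * r ^ (m + 1)))
    (l : ℕ) (Cn X : ℂ) (w : ℂ) (hw : 0 < w.im) :
    Summable (fun m : ℕ => Cn * (am (m+1) * (X^l * Qf (muF m) w l w))) := by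
  have base := summable_master am hsum w hw
    (fun m => Cn * X^l * ((l.factorial : ℂ)/(muF m)^(l+1)))
    (‖Cn * X^l‖ * (l.factorial : ℝ))
    (by
      intro m
      rw [norm_mul]
      apply mul_le_mul_of_nonneg_left _ (norm_nonneg _)
      refine le_trans (norm_div_mu_le _ m (l+1)) ?_
      simp)
  apply base.congr
  intro m
  rw [Qf_self]
  ring

lemma summable_S (am : ℕ → ℂ)
    (hsum : ∀ r : ℝ, 0 < r → r < 1 → Summable (fun m : ℕ => ‖am (m + 1)‖ * r ^ (m + 1)))
    (l j : ℕ) (Cn Y : ℂ) (w₀ : ℂ) (hw₀ : 0 < w₀.im) :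
    Summable (fun m : ℕ =>
      am (m+1) * (Cn * ((l.factorial : ℂ)/(((l-j).factorial : ℂ))/(muF m)^(j+1) * Y))
        * Complex.exp (muF m * w₀)) := by
  apply summable_master am hsum w₀ hw₀
    (fun m => Cn * ((l.factorial : ℂ)/(((l-j).factorial : ℂ))/(muF m)^(j+1) * Y))
    (‖Cn‖ * (((l.factorial : ℝ)/((l-j).factorial : ℝ)) * ‖Y‖))
  intro m
  rw [norm_mul]
  apply mul_le_mul_of_nonneg_left _ (norm_nonneg _)
  rw [norm_mul]
  apply mul_le_mul_of_nonneg_right _ (norm_nonneg _)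
  refine le_trans (norm_div_mu_le _ m (j+1)) ?_
  rw [norm_div]
  simp


lemma summable_Qc (am : ℕ → ℂ)
    (hsum : ∀ r : ℝ, 0 < r → r < 1 → Summable (fun m : ℕ => ‖am (m + 1)‖ * r ^ (m + 1)))
    (l : ℕ) (Cn X w' w₀ : ℂ) (hw₀ : 0 < w₀.im) :
    Summable (fun m : ℕ => Cn * (am (m+1) * (X^l * Qf (muF m) w' l w₀))) := by
  have h : ∀ m : ℕ, Cn * (am (m+1) * (X^l * Qf (muF m) w' l w₀))
      = ∑ j ∈ Finset.range (l+1),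
          am (m+1) * (Cn * ((l.factorial : ℂ)/(((l-j).factorial : ℂ))/(muF m)^(j+1)
            * (X^l * (w' - w₀)^(l-j)))) * Complex.exp (muF m * w₀) := by
    intro m
    rw [Qf_closed, Finset.mul_sum, Finset.mul_sum, Finset.mul_sum]
    apply Finset.sum_congr rfl
    intro j hj
    ring
  apply Summable.congr _ (fun m => (h m).symm)
  apply summable_sum
  intro j hj
  exact summable_S am hsum l j Cn (X^l * (w' - w₀)^(l-j)) w₀ hw₀

lemma eichler_split (hdet : a * d - b * c = 1) (k l : ℕ) (hkl : k = l + 2)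
    (f : ℂ → ℂ) (am : ℕ → ℂ)
    (hsum : ∀ r : ℝ, 0 < r → r < 1 → Summable (fun m : ℕ => ‖am (m + 1)‖ * r ^ (m + 1)))
    (hfourier : ∀ τ : ℂ, 0 < τ.im →
      slash (k : ℤ) a b c d f τ =
        ∑' m : ℕ, am (m + 1) * Complex.exp (2 * (Real.pi : ℂ) * Complex.I * ((m : ℂ) + 1) * τ))
    (τ₀ τ : ℂ) (h₀ : 0 < τ₀.im) (hτ : 0 < τ.im) :
    eichler k f τ₀ τ
      = (∑' m : ℕ, (2*(Real.pi:ℂ)*Complex.I)^(l+1)/(l.factorial : ℂ)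
            * (am (m+1) * ((-(c:ℂ)*τ+a)^l * Qf (muF m) (giF a b c d τ) l (giF a b c d τ))))
        - (∑' m : ℕ, (2*(Real.pi:ℂ)*Complex.I)^(l+1)/(l.factorial : ℂ)
            * (am (m+1) * ((-(c:ℂ)*τ+a)^l * Qf (muF m) (giF a b c d τ) l (giF a b c d τ₀)))) := by
  have hk2 : k - 2 = l := by omega
  have hk1 : k - 1 = l + 1 := by omega
  have hEq : eichler k f τ₀ τ = (2*(Real.pi:ℂ)*Complex.I)^(l+1)/(l.factorial : ℂ)
      * ∫ t in (0:ℝ)..1, (∑' m : ℕ, ((τ - (τ₀ + (t:ℂ)*(τ-τ₀)))^l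
          * (am (m+1) * ((-(c:ℂ)*(τ₀ + (t:ℂ)*(τ-τ₀))+a)^k)⁻¹
              * Complex.exp (muF m * giF a b c d (τ₀ + (t:ℂ)*(τ-τ₀)))) * (τ-τ₀))) := by
    unfold eichler segInt
    simp only [hk1, hk2]
    congr 1
    apply intervalIntegral.integral_congr
    intro t ht
    simp only
    rw [pointwise_fourier a b c d hdet k f am hfourier _ (seg_im τ₀ τ h₀ hτ t ht)]
    rw [← tsum_mul_left, ← tsum_mul_right]
  rw [hEq, interchange a b c d hdet k l am hsum τ₀ τ h₀ hτ]
  have hmode : ∀ m : ℕ, (∫ t in (0:ℝ)..1, ((τ - (τ₀ + (t:ℂ)*(τ-τ₀)))^l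
          * (am (m+1) * ((-(c:ℂ)*(τ₀ + (t:ℂ)*(τ-τ₀))+a)^k)⁻¹
              * Complex.exp (muF m * giF a b c d (τ₀ + (t:ℂ)*(τ-τ₀)))) * (τ-τ₀)))
      = am (m+1) * ((-(c:ℂ)*τ+a)^l * Qf (muF m) (giF a b c d τ) l (giF a b c d τ))
        - am (m+1) * ((-(c:ℂ)*τ+a)^l * Qf (muF m) (giF a b c d τ) l (giF a b c d τ₀)) :=
    fun m => mode_integral a b c d hdet k l hkl m (am (m+1)) τ₀ τ h₀ hτ
  rw [tsum_congr hmode]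
  have hs1 := summable_F am hsum l ((2*(Real.pi:ℂ)*Complex.I)^(l+1)/(l.factorial : ℂ))
    (-(c:ℂ)*τ+a) (giF a b c d τ) (gi_im_pos a b c d hdet τ hτ)
  have hs2 := summable_Qc am hsum l ((2*(Real.pi:ℂ)*Complex.I)^(l+1)/(l.factorial : ℂ))
    (-(c:ℂ)*τ+a) (giF a b c d τ) (giF a b c d τ₀) (gi_im_pos a b c d hdet τ₀ h₀)
  rw [← Summable.tsum_sub hs1 hs2, ← tsum_mul_left]
  apply tsum_congr
  intro m
  rw [mul_sub]

end main


/-- Let `γ = g·T·g⁻¹ = (1−ac, a²; −c², 1+ac)` be a parabolic element, with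
`g = (a b; c d) ∈ SL(2, ℝ)` and `T = (1 1; 0 1)`.  If `f` is holomorphic on the upper
half-plane, invariant of weight `k` under `γ`, and `f|_k g` has a Fourier expansion
`Σ_{m≥1} a_m e^{2πimτ}` with `Σ_{m≥1} |a_m| r^m < ∞` for all `0 < r < 1`, then for every `τ₀`
in the upper half-plane the period polynomial `f̃_{τ₀}|_{2−k}(γ−1)` is a coboundary:
there is a polynomial `p` of degree at most `k−2` with
`(f̃_{τ₀}|_{2−k}γ)(τ) − f̃_{τ₀}(τ) = (p|_{2−k}γ)(τ) − p(τ)` on the upper half-plane. -/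
theorem period_polynomial_parabolic (k : ℕ) (hk : 2 ≤ k)
    (f : ℂ → ℂ) (hf : DifferentiableOn ℂ f {τ : ℂ | 0 < τ.im})
    (a b c d : ℝ) (hdet : a * d - b * c = 1)
    (hinv : ∀ τ : ℂ, 0 < τ.im →
      slash (k : ℤ) (1 - a * c) (a ^ 2) (-c ^ 2) (1 + a * c) f τ = f τ)
    (am : ℕ → ℂ)
    (hsum : ∀ r : ℝ, 0 < r → r < 1 → Summable (fun m : ℕ => ‖am (m + 1)‖ * r ^ (m + 1)))
    (hfourier : ∀ τ : ℂ, 0 < τ.im →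
      slash (k : ℤ) a b c d f τ =
        ∑' m : ℕ, am (m + 1) * Complex.exp (2 * (Real.pi : ℂ) * Complex.I * ((m : ℂ) + 1) * τ)) :
    ∀ τ₀ : ℂ, 0 < τ₀.im →
      ∃ p : Polynomial ℂ, p.natDegree ≤ k - 2 ∧
        ∀ τ : ℂ, 0 < τ.im →
          slash (2 - (k : ℤ)) (1 - a * c) (a ^ 2) (-c ^ 2) (1 + a * c) (eichler k f τ₀) τ
              - eichler k f τ₀ τ
            = slash (2 - (k : ℤ)) (1 - a * c) (a ^ 2) (-c ^ 2) (1 + a * c)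
                (fun σ => p.eval σ) τ - p.eval τ := by
  intro τ₀ hτ₀
  set l : ℕ := k - 2 with hldef
  have hkl : k = l + 2 := by omega
  set w0 : ℂ := giF a b c d τ₀ with hw0
  have hw0im : 0 < w0.im := gi_im_pos a b c d hdet τ₀ hτ₀
  set Cn : ℂ := (2*(Real.pi:ℂ)*Complex.I)^(l+1)/(l.factorial : ℂ) with hCn
  set KK : ℕ → ℂ := fun j => ∑' m : ℕ,
    Cn * (am (m+1) * ((l.factorial : ℂ)/(((l-j).factorial : ℂ))/(muF m)^(j+1)))
      * Complex.exp (muF m * w0) with hKK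
  refine ⟨-(∑ j ∈ Finset.range (l+1), Polynomial.C (KK j)
      * ((Polynomial.C ((d:ℂ)+w0*c) * Polynomial.X + Polynomial.C (-((b:ℂ)+w0*a)))^(l-j)
        * (Polynomial.C (-(c:ℂ)) * Polynomial.X + Polynomial.C (a:ℂ))^j)), ?_, ?_⟩
  · -- degree bound
    rw [Polynomial.natDegree_neg]
    apply Polynomial.natDegree_sum_le_of_forall_le
    intro j hj
    have hj' : j ≤ l := by
      have := Finset.mem_range.mp hj; omega
    refine le_trans (Polynomial.natDegree_mul_le) ?_
    rw [Polynomial.natDegree_C, zero_add]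
    refine le_trans (Polynomial.natDegree_mul_le) ?_
    have d1 : ((Polynomial.C ((d:ℂ)+w0*c) * Polynomial.X
        + Polynomial.C (-((b:ℂ)+w0*a)))^(l-j)).natDegree ≤ (l-j) := by
      refine le_trans (Polynomial.natDegree_pow_le) ?_
      have := Polynomial.natDegree_linear_le (a := ((d:ℂ)+w0*c)) (b := (-((b:ℂ)+w0*a)))
      nlinarith [this]
    have d2 : ((Polynomial.C (-(c:ℂ)) * Polynomial.X + Polynomial.C (a:ℂ))^j).natDegree ≤ j := by
      refine le_trans (Polynomial.natDegree_pow_le) ?_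
      have := Polynomial.natDegree_linear_le (a := (-(c:ℂ))) (b := ((a:ℝ):ℂ))
      nlinarith [this]
    omega
  · -- main identity
    intro τ hτ
    have hΓim : 0 < ((((1-a*c:ℝ):ℂ)*τ + ((a^2:ℝ):ℂ)) / (((-c^2:ℝ):ℂ)*τ + ((1+a*c:ℝ):ℂ))).im :=
      gam_im_pos a c τ hτ
    set Γτ : ℂ := (((1-a*c:ℝ):ℂ)*τ + ((a^2:ℝ):ℂ)) / (((-c^2:ℝ):ℂ)*τ + ((1+a*c:ℝ):ℂ)) with hΓdef
    set jγ : ℂ := ((-c^2:ℝ):ℂ)*τ + ((1+a*c:ℝ):ℂ) with hjγ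
    -- evaluation of p
    have hpeval : ∀ σ : ℂ, Polynomial.eval σ (-(∑ j ∈ Finset.range (l+1), Polynomial.C (KK j)
        * ((Polynomial.C ((d:ℂ)+w0*c) * Polynomial.X + Polynomial.C (-((b:ℂ)+w0*a)))^(l-j)
          * (Polynomial.C (-(c:ℂ)) * Polynomial.X + Polynomial.C (a:ℂ))^j)))
        = -(∑ j ∈ Finset.range (l+1), KK j
            * ((((d:ℂ)+w0*c)*σ + (-((b:ℂ)+w0*a)))^(l-j) * (-(c:ℂ)*σ + a)^j)) := by
      intro σ
      rw [Polynomial.eval_neg, Polynomial.eval_finset_sum]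
      congr 1
      apply Finset.sum_congr rfl
      intro j hj
      simp [Polynomial.eval_mul, Polynomial.eval_pow, Polynomial.eval_add, Polynomial.eval_C,
        Polynomial.eval_X]
    -- identification of the S-sum
    have hS : ∀ σ : ℂ, 0 < σ.im →
        (∑' m : ℕ, Cn * (am (m+1) * ((-(c:ℂ)*σ+a)^l * Qf (muF m) (giF a b c d σ) l w0)))
        = ∑ j ∈ Finset.range (l+1), KK j
            * ((((d:ℂ)+w0*c)*σ + (-((b:ℂ)+w0*a)))^(l-j) * (-(c:ℂ)*σ + a)^j) := by
      intro σ hσ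
      have hperm : ∀ m : ℕ, Cn * (am (m+1) * ((-(c:ℂ)*σ+a)^l * Qf (muF m) (giF a b c d σ) l w0))
          = ∑ j ∈ Finset.range (l+1),
              (Cn * (am (m+1) * ((l.factorial : ℂ)/(((l-j).factorial : ℂ))/(muF m)^(j+1)))
                * Complex.exp (muF m * w0))
              * ((((d:ℂ)+w0*c)*σ + (-((b:ℂ)+w0*a)))^(l-j) * (-(c:ℂ)*σ + a)^j) := by
        intro m
        rw [Qf_closed, Finset.mul_sum, Finset.mul_sum, Finset.mul_sum]
        apply Finset.sum_congr rfl
        intro j hj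
        have hj' : j ≤ l := by
          have := Finset.mem_range.mp hj; omega
        have hXl : (-(c:ℂ)*σ+a)^l = (-(c:ℂ)*σ+a)^(l-j) * (-(c:ℂ)*σ+a)^j := by
          rw [← pow_add, Nat.sub_add_cancel hj']
        have hA5 : ((-(c:ℂ)*σ+a) * (giF a b c d σ - w0))^(l-j)
            = ((((d:ℂ)+w0*c)*σ + (-((b:ℂ)+w0*a))))^(l-j) := by
          rw [A5 a b c d w0 hdet σ hσ]
          ring_nf
        rw [hXl]
        rw [← hA5, mul_pow]
        ring
      rw [tsum_congr hperm]
      rw [Summable.tsum_finsetSum (fun j hj => by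
        apply ((summable_S am hsum l j Cn
          (((((d:ℂ)+w0*c)*σ + (-((b:ℂ)+w0*a)))^(l-j) * (-(c:ℂ)*σ + a)^j)) w0 hw0im)).congr
        intro m
        ring)]
      apply Finset.sum_congr rfl
      intro j hj
      rw [tsum_mul_right]
    -- F-invariance
    have hFinv : jγ^l * (∑' m : ℕ,
          Cn * (am (m+1) * ((-(c:ℂ)*Γτ+a)^l * Qf (muF m) (giF a b c d Γτ) l (giF a b c d Γτ))))
        = ∑' m : ℕ, Cn * (am (m+1) * ((-(c:ℂ)*τ+a)^l * Qf (muF m) (giF a b c d τ) l (giF a b c d τ))) := by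
      rw [← tsum_mul_left]
      apply tsum_congr
      intro m
      rw [hΓdef, A3 a b c d hdet τ hτ]
      rw [Qf_self, Qf_self]
      have hexp1 : Complex.exp (muF m * (giF a b c d τ + 1))
          = Complex.exp (muF m * giF a b c d τ) := by
        rw [mul_add, Complex.exp_add, mul_one]
        have hmu : muF m = ((((m+1:ℕ)):ℤ):ℂ) * (2*(Real.pi:ℂ)*Complex.I) := by
          unfold muF; push_cast; ring
        rw [hmu, Complex.exp_int_mul_two_pi_mul_I, mul_one]
      rw [hexp1]
      have hpow : (-(c:ℂ)*Γτ+a)^l * jγ^l = (-(c:ℂ)*τ+a)^l := by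
        rw [← mul_pow, hjγ, hΓdef, A4 a c τ hτ]
      linear_combination (Cn * am (m+1) * ((l.factorial : ℂ)/(muF m)^(l+1)
        * Complex.exp (muF m * giF a b c d τ))) * hpow
    -- unfold the slash actions and eichler integrals
    unfold slash
    have hzp : (-(2 - (k:ℤ))) = (l:ℤ) := by omega
    rw [hzp]
    simp only [zpow_natCast]
    rw [eichler_split a b c d hdet k l hkl f am hsum hfourier τ₀ τ hτ₀ hτ]
    rw [eichler_split a b c d hdet k l hkl f am hsum hfourier τ₀ Γτ hτ₀ hΓim]
    rw [hpeval τ, hpeval Γτ]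
    have hSτ := hS τ hτ
    have hSΓ := hS Γτ hΓim
    rw [← hCn] at *
    linear_combination hFinv - jγ^l * hSΓ + hSτ
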